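/- Let A ∈ ℝ^{n×n}, B ∈ ℝ^{n×m}, C ∈ ℝ^{p×n}, E ∈ ℝ^{n×q}, F ∈ ℝ^{p×q}, S ∈ ℝ^{q×q} and K_x ∈ ℝ^{m×n}. Suppose A + B K_x is Hurwitz and that there exist Π ∈ ℝ^{n×q} and Γ ∈ ℝ^{m×q} solving the output regulation equations Π S = A Π + B Γ + E and 0 = C Π + F. Set K_v := Γ − K_x Π. Then for all differentiable functions x : ℝ → ℝⁿ and v : ℝ → ℝ^q satisfying ẋ(t) = A x(t) + B (K_x x(t) + K_v v(t)) + E v(t) and v̇(t) = S v(t) for all t ≥ 0, the tracking error e(t) := C x(t) + F v(t) tends to 0 as t → ∞. -/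

import Mathlib

open Matrix Filter NormedSpace

attribute [local instance] Matrix.linftyOpNormedAddCommGroup Matrix.linftyOpNormedSpace
  Matrix.linftyOpNormedRing Matrix.linftyOpNormedAlgebra

namespace StmtFourAux

/-- `mulVec` in the matrix argument, with fixed vector, as a continuous linear map. -/
noncomputable def mulVecCLM (𝕜 : Type*) [RCLike 𝕜] {a b : ℕ} (w : Fin b → 𝕜) :
    Matrix (Fin a) (Fin b) 𝕜 →L[𝕜] (Fin a → 𝕜) :=
  LinearMap.toContinuousLinearMap
    { toFun := fun X => X *ᵥ w
      map_add' := fun X Y => Matrix.add_mulVec X Y w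
      map_smul' := fun c X => Matrix.smul_mulVec c X w }

@[simp] lemma mulVecCLM_apply (𝕜 : Type*) [RCLike 𝕜] {a b : ℕ} (w : Fin b → 𝕜)
    (X : Matrix (Fin a) (Fin b) 𝕜) : mulVecCLM 𝕜 w X = X *ᵥ w := rfl

/-- `mulVec` as a continuous-linear-map-valued continuous linear map. -/
noncomputable def toCLM (𝕜 : Type*) [RCLike 𝕜] {a b : ℕ} :
    Matrix (Fin a) (Fin b) 𝕜 →L[𝕜] ((Fin b → 𝕜) →L[𝕜] (Fin a → 𝕜)) :=
  LinearMap.toContinuousLinearMap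
    { toFun := fun X => LinearMap.toContinuousLinearMap (Matrix.mulVecLin X)
      map_add' := fun X Y => by
        ext v
        simp [Matrix.add_mulVec]
      map_smul' := fun c X => by
        ext v
        simp [Matrix.smul_mulVec] }

@[simp] lemma toCLM_apply (𝕜 : Type*) [RCLike 𝕜] {a b : ℕ}
    (X : Matrix (Fin a) (Fin b) 𝕜) (v : Fin b → 𝕜) : toCLM 𝕜 X v = X *ᵥ v := rfl

/-- Product rule for `fun s => N s *ᵥ z s`. -/
lemma hasDerivAt_mulVec {a b : ℕ} {N : ℝ → Matrix (Fin a) (Fin b) ℝ}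
    {N' : Matrix (Fin a) (Fin b) ℝ} {z : ℝ → Fin b → ℝ} {z' : Fin b → ℝ} {t : ℝ}
    (hN : HasDerivAt N N' t) (hz : HasDerivAt z z' t) :
    HasDerivAt (fun s => N s *ᵥ z s) (N' *ᵥ z t + N t *ᵥ z') t := by
  have h1 : HasDerivAt (fun s => toCLM ℝ (N s)) (toCLM ℝ N') t :=
    (toCLM ℝ).hasFDerivAt.comp_hasDerivAt t hN
  simpa using h1.clm_apply hz

/-- Uniqueness for the linear ODE `z' = M z` on `[0, ∞)`. -/
lemma eq_exp_mulVec {a : ℕ} (M : Matrix (Fin a) (Fin a) ℝ) (z : ℝ → Fin a → ℝ)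
    (hz : ∀ t, 0 ≤ t → HasDerivAt z (M *ᵥ z t) t) :
    ∀ t, 0 ≤ t → z t = exp (t • M) *ᵥ z 0 := by
  intro t ht
  have hg : ∀ s, 0 ≤ s → HasDerivAt (fun u : ℝ => exp (u • (-M)) *ᵥ z u) 0 s := by
    intro s hs
    have hexp : HasDerivAt (fun u : ℝ => exp (u • (-M))) (exp (s • (-M)) * (-M)) s :=
      hasDerivAt_exp_smul_const (-M) s
    have h2 := hasDerivAt_mulVec hexp (hz s hs)
    convert h2 using 1
    rw [Matrix.mulVec_mulVec, mul_neg, Matrix.neg_mulVec, neg_add_cancel]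
  have hconst : ∀ s ∈ Set.Icc (0 : ℝ) t,
      exp (s • (-M)) *ᵥ z s = exp ((0 : ℝ) • (-M)) *ᵥ z 0 := by
    intro s hs
    exact constant_of_has_deriv_right_zero
      (fun u hu => (hg u hu.1).continuousAt.continuousWithinAt)
      (fun u hu => (hg u hu.1).hasDerivWithinAt) s hs
  have hkey := hconst t ⟨ht, le_rfl⟩
  have h0 : exp ((0 : ℝ) • (-M)) *ᵥ z 0 = z 0 := by
    simp [zero_smul, exp_zero]
  have hinv : exp (t • M) * exp (t • (-M)) = 1 := by
    rw [smul_neg, ← Matrix.exp_add_of_commute (t • M) (-(t • M)) ((Commute.refl (t • M)).neg_right),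
      add_neg_cancel, exp_zero]
  calc z t = (1 : Matrix (Fin a) (Fin a) ℝ) *ᵥ z t := (Matrix.one_mulVec _).symm
    _ = (exp (t • M) * exp (t • (-M))) *ᵥ z t := by rw [hinv]
    _ = exp (t • M) *ᵥ (exp (t • (-M)) *ᵥ z t) := (Matrix.mulVec_mulVec _ _ _).symm
    _ = exp (t • M) *ᵥ z 0 := by rw [hkey, h0]

/-- Scalar decay: `t ^ j * exp (c * t) → 0` when `c < 0`. -/
lemma tendsto_pow_mul_exp_neg {c : ℝ} (hc : c < 0) (j : ℕ) :
    Tendsto (fun t : ℝ => t ^ j * Real.exp (c * t)) atTop (nhds 0) := by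
  have hpos : (0 : ℝ) < -c := by linarith
  have h1 : Tendsto (fun t : ℝ => -c * t) atTop atTop :=
    tendsto_id.const_mul_atTop hpos
  have h2 := (Real.tendsto_pow_mul_exp_neg_atTop_nhds_zero j).comp h1
  have h3 := h2.const_mul (((-c) ^ j)⁻¹)
  rw [mul_zero] at h3
  refine h3.congr fun t => ?_
  simp only [Function.comp_apply]
  have hne : ((-c) ^ j) ≠ 0 := pow_ne_zero _ (by linarith)
  rw [mul_pow, show -(-c * t) = c * t by ring, ← mul_assoc, ← mul_assoc,
    inv_mul_cancel₀ hne, one_mul]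

/-- Decay of `exp (t • Mc) *ᵥ w` when all eigenvalues of `Mc` have negative real part. -/
lemma tendsto_exp_smul_mulVec {a : ℕ} (Mc : Matrix (Fin a) (Fin a) ℂ)
    (h : ∀ μ ∈ spectrum ℂ Mc, μ.re < 0) (w : Fin a → ℂ) :
    Tendsto (fun t : ℝ => exp (t • Mc) *ᵥ w) atTop (nhds 0) := by
  have hsm : ∀ (t : ℝ) (X : Matrix (Fin a) (Fin a) ℂ), t • X = (t : ℂ) • X := by
    intro t X
    rw [← Complex.coe_algebraMap, algebraMap_smul]
  set f : Module.End ℂ (Fin a → ℂ) := Matrix.toLinAlgEquiv' Mc with hf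
  have htop : w ∈ ⨆ μ : ℂ, f.maxGenEigenspace μ := by
    rw [Module.End.iSup_maxGenEigenspace_eq_top]; trivial
  refine Submodule.iSup_induction
    (motive := fun w => Tendsto (fun t : ℝ => exp (t • Mc) *ᵥ w) atTop (nhds 0)) _ htop ?_ ?_ ?_
  · -- vectors in a generalized eigenspace
    intro μ w hw
    rcases eq_or_ne w 0 with rfl | hw0
    · simpa [Matrix.mulVec_zero] using (tendsto_const_nhds :
        Tendsto (fun _ : ℝ => (0 : Fin a → ℂ)) atTop (nhds 0))
    obtain ⟨k, hk⟩ := (Module.End.mem_maxGenEigenspace f μ w).mp hw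
    set N : Matrix (Fin a) (Fin a) ℂ := Mc - μ • 1 with hNdef
    have hNk : (N ^ k) *ᵥ w = 0 := by
      have hEq : Matrix.toLinAlgEquiv' (N ^ k) = (f - μ • 1) ^ k := by
        rw [map_pow, map_sub, _root_.map_smul, _root_.map_one, ← hf]
      calc (N ^ k) *ᵥ w = (Matrix.toLinAlgEquiv' (N ^ k)) w :=
            (Matrix.toLinAlgEquiv'_apply _ _).symm
        _ = ((f - μ • 1) ^ k) w := by rw [hEq]
        _ = 0 := hk
    have hre : μ.re < 0 := by
      apply h
      by_contra hmem
      have hunit : IsUnit ((algebraMap ℂ (Matrix (Fin a) (Fin a) ℂ)) μ - Mc) :=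
        spectrum.notMem_iff.mp hmem
      have hNu : IsUnit N := by
        have : N = -((algebraMap ℂ (Matrix (Fin a) (Fin a) ℂ)) μ - Mc) := by
          rw [Algebra.algebraMap_eq_smul_one, hNdef, neg_sub]
        rw [this]
        exact hunit.neg
      have hinj := Matrix.mulVec_injective_iff_isUnit.mpr (hNu.pow k)
      exact hw0 (hinj (by rw [hNk, Matrix.mulVec_zero]))
    -- key expansion
    have key : ∀ τ : ℂ, exp (τ • Mc) *ᵥ w
        = ∑ j ∈ Finset.range k,
            (Complex.exp (τ * μ) * (((j.factorial : ℂ))⁻¹ * τ ^ j)) • (N ^ j *ᵥ w) := by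
      intro τ
      have hc : Commute (τ • (μ • (1 : Matrix (Fin a) (Fin a) ℂ))) (τ • N) :=
        (((Commute.one_left N).smul_left μ).smul_left τ).smul_right τ
      have hMc : τ • Mc = τ • (μ • (1 : Matrix (Fin a) (Fin a) ℂ)) + τ • N := by
        rw [← smul_add, add_sub_cancel]
      have h1 : exp (τ • (μ • (1 : Matrix (Fin a) (Fin a) ℂ)))
          = Complex.exp (τ * μ) • (1 : Matrix (Fin a) (Fin a) ℂ) := by
        rw [smul_smul, ← Algebra.algebraMap_eq_smul_one]
        erw [← map_exp (algebraMap ℂ (Matrix (Fin a) (Fin a) ℂ)) (continuous_algebraMap ℂ _)]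
        rw [← Complex.exp_eq_exp_ℂ, Algebra.algebraMap_eq_smul_one]
      have h2 : exp (τ • N) *ᵥ w
          = ∑ j ∈ Finset.range k, (((j.factorial : ℂ))⁻¹ * τ ^ j) • (N ^ j *ᵥ w) := by
        have hsum := NormedSpace.expSeries_summable' (𝕂 := ℂ) (τ • N)
        calc exp (τ • N) *ᵥ w
            = mulVecCLM ℂ w (∑' j : ℕ, ((j.factorial : ℂ))⁻¹ • (τ • N) ^ j) := by
              rw [NormedSpace.exp_eq_tsum (𝕂 := ℂ)]
              rfl
          _ = ∑' j : ℕ, mulVecCLM ℂ w (((j.factorial : ℂ))⁻¹ • (τ • N) ^ j) :=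
              (mulVecCLM ℂ w).map_tsum hsum
          _ = ∑' j : ℕ, (((j.factorial : ℂ))⁻¹ * τ ^ j) • (N ^ j *ᵥ w) := by
              refine tsum_congr fun j => ?_
              rw [_root_.map_smul, mulVecCLM_apply, smul_pow, Matrix.smul_mulVec,
                smul_smul]
          _ = ∑ j ∈ Finset.range k, (((j.factorial : ℂ))⁻¹ * τ ^ j) • (N ^ j *ᵥ w) := by
              refine tsum_eq_sum fun j hj => ?_
              have hjk : k ≤ j := by
                by_contra hlt
                exact hj (Finset.mem_range.mpr (lt_of_not_ge hlt))
              have hzero : N ^ j *ᵥ w = 0 := by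
                rw [show N ^ j = N ^ (j - k) * N ^ k by
                    rw [← pow_add, Nat.sub_add_cancel hjk],
                  ← Matrix.mulVec_mulVec, hNk, Matrix.mulVec_zero]
              rw [hzero, smul_zero]
      rw [hMc, Matrix.exp_add_of_commute _ _ hc, h1, smul_mul_assoc, one_mul,
        Matrix.smul_mulVec, h2, Finset.smul_sum]
      exact Finset.sum_congr rfl fun j hj => (smul_smul _ _ _)
    -- pass to the limit
    have hcongr : (fun t : ℝ => exp (t • Mc) *ᵥ w)
        = fun t : ℝ => ∑ j ∈ Finset.range k,
            (Complex.exp ((t : ℂ) * μ) * (((j.factorial : ℂ))⁻¹ * (t : ℂ) ^ j)) • (N ^ j *ᵥ w) := by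
      funext t
      rw [hsm t Mc, key ((t : ℝ) : ℂ)]
    rw [hcongr]
    have hsum0 : Tendsto (fun t : ℝ => ∑ j ∈ Finset.range k,
        (Complex.exp ((t : ℂ) * μ) * (((j.factorial : ℂ))⁻¹ * (t : ℂ) ^ j)) • (N ^ j *ᵥ w))
        atTop (nhds (∑ j ∈ Finset.range k, (0 : Fin a → ℂ))) := by
      refine tendsto_finset_sum _ fun j _ => ?_
      have hscal : Tendsto (fun t : ℝ =>
          Complex.exp ((t : ℂ) * μ) * (((j.factorial : ℂ))⁻¹ * (t : ℂ) ^ j)) atTop (nhds 0) := by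
        have hb : Tendsto (fun t : ℝ =>
            ((j.factorial : ℝ))⁻¹ * (t ^ j * Real.exp (μ.re * t))) atTop (nhds 0) := by
          simpa using (tendsto_pow_mul_exp_neg hre j).const_mul ((j.factorial : ℝ))⁻¹
        refine squeeze_zero_norm' ?_ hb
        filter_upwards [eventually_ge_atTop (0 : ℝ)] with t ht
        have habs : ‖Complex.exp ((t : ℂ) * μ) * (((j.factorial : ℂ))⁻¹ * (t : ℂ) ^ j)‖
            = Real.exp (t * μ.re) * (((j.factorial : ℝ))⁻¹ * |t| ^ j) := by
          simp [norm_mul, norm_pow, norm_inv, Complex.norm_exp,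
            Complex.norm_real, Complex.norm_natCast, Complex.re_ofReal_mul]
        rw [habs, abs_of_nonneg ht]
        apply le_of_eq
        ring
      have := hscal.smul_const (N ^ j *ᵥ w)
      simpa using this
    simpa using hsum0
  · simpa [Matrix.mulVec_zero] using (tendsto_const_nhds :
      Tendsto (fun _ : ℝ => (0 : Fin a → ℂ)) atTop (nhds 0))
  · intro w1 w2 h1 h2
    have := h1.add h2
    simp only [Matrix.mulVec_add]
    simpa using this

end StmtFourAux

theorem stmt_4 (n m p q : ℕ)
    (A : Matrix (Fin n) (Fin n) ℝ) (B : Matrix (Fin n) (Fin m) ℝ)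
    (C : Matrix (Fin p) (Fin n) ℝ) (E : Matrix (Fin n) (Fin q) ℝ)
    (F : Matrix (Fin p) (Fin q) ℝ) (S : Matrix (Fin q) (Fin q) ℝ)
    (Kx : Matrix (Fin m) (Fin n) ℝ)
    (hHur : ∀ μ ∈ spectrum ℂ ((A + B * Kx).map (algebraMap ℝ ℂ)), μ.re < 0)
    (Pm : Matrix (Fin n) (Fin q) ℝ) (Gm : Matrix (Fin m) (Fin q) ℝ)
    (hORE1 : Pm * S = A * Pm + B * Gm + E)
    (hORE2 : 0 = C * Pm + F)
    (Kv : Matrix (Fin m) (Fin q) ℝ) (hKv : Kv = Gm - Kx * Pm) :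
    ∀ (x : ℝ → Fin n → ℝ) (v : ℝ → Fin q → ℝ),
      (∀ t, 0 ≤ t → HasDerivAt x
        (A.mulVec (x t) + B.mulVec (Kx.mulVec (x t) + Kv.mulVec (v t))
          + E.mulVec (v t)) t) →
      (∀ t, 0 ≤ t → HasDerivAt v (S.mulVec (v t)) t) →
      Tendsto (fun t => C.mulVec (x t) + F.mulVec (v t)) atTop (nhds 0) := by
  intro x v hx hv
  set M : Matrix (Fin n) (Fin n) ℝ := A + B * Kx with hM
  set z : ℝ → Fin n → ℝ := fun t => x t - Pm *ᵥ v t with hzdef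
  have hmp : M * Pm = Pm * S - B * Kv - E := by
    rw [hM, hKv, hORE1, Matrix.add_mul, Matrix.mul_sub, Matrix.mul_assoc]
    abel
  have hvec : ∀ (xv : Fin n → ℝ) (vv : Fin q → ℝ),
      A *ᵥ xv + B *ᵥ (Kx *ᵥ xv + Kv *ᵥ vv) + E *ᵥ vv - Pm *ᵥ (S *ᵥ vv)
        = M *ᵥ (xv - Pm *ᵥ vv) := by
    intro xv vv
    have e1 : B *ᵥ (Kx *ᵥ xv + Kv *ᵥ vv) = (B * Kx) *ᵥ xv + (B * Kv) *ᵥ vv := by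
      rw [Matrix.mulVec_add, Matrix.mulVec_mulVec, Matrix.mulVec_mulVec]
    have e3 : M *ᵥ (xv - Pm *ᵥ vv)
        = M *ᵥ xv - ((Pm * S) *ᵥ vv - (B * Kv) *ᵥ vv - E *ᵥ vv) := by
      rw [Matrix.mulVec_sub, Matrix.mulVec_mulVec, hmp, Matrix.sub_mulVec,
        Matrix.sub_mulVec]
    have e4 : M *ᵥ xv = A *ᵥ xv + (B * Kx) *ᵥ xv := by
      rw [hM, Matrix.add_mulVec]
    rw [e1, Matrix.mulVec_mulVec, e3, e4]
    abel
  have hz : ∀ t, 0 ≤ t → HasDerivAt z (M *ᵥ z t) t := by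
    intro t ht
    have hPv : HasDerivAt (fun s => Pm *ᵥ v s) (Pm *ᵥ (S *ᵥ v t)) t := by
      have := (StmtFourAux.toCLM ℝ Pm).hasFDerivAt.comp_hasDerivAt t (hv t ht)
      simpa [Function.comp_def] using this
    have hdz := (hx t ht).sub hPv
    have := hvec (x t) (v t)
    rw [this] at hdz
    exact hdz
  have hCP : C * Pm = -F := eq_neg_of_add_eq_zero_left hORE2.symm
  have herr : ∀ t, C *ᵥ x t + F *ᵥ v t = C *ᵥ z t := by
    intro t
    rw [hzdef]
    rw [Matrix.mulVec_sub, Matrix.mulVec_mulVec, hCP, Matrix.neg_mulVec, sub_neg_eq_add]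
  -- complexification
  set Mc : Matrix (Fin n) (Fin n) ℂ := M.map (algebraMap ℝ ℂ) with hMc
  have hcont : Continuous ((algebraMap ℝ ℂ).mapMatrix :
      Matrix (Fin n) (Fin n) ℝ →+* Matrix (Fin n) (Fin n) ℂ) := by
    let L : Matrix (Fin n) (Fin n) ℝ →ₗ[ℝ] Matrix (Fin n) (Fin n) ℂ :=
      { toFun := fun X => X.map (algebraMap ℝ ℂ)
        map_add' := fun X Y => by ext i j; simp
        map_smul' := fun c X => by ext i j; simp }
    exact L.continuous_of_finiteDimensional
  have hexp : ∀ t : ℝ, (exp (t • M)).map (algebraMap ℝ ℂ) = exp (t • Mc) := by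
    intro t
    have h1 := map_exp ((algebraMap ℝ ℂ).mapMatrix :
      Matrix (Fin n) (Fin n) ℝ →+* Matrix (Fin n) (Fin n) ℂ) hcont (t • M)
    have h2 : ((algebraMap ℝ ℂ).mapMatrix :
        Matrix (Fin n) (Fin n) ℝ →+* Matrix (Fin n) (Fin n) ℂ) (t • M) = t • Mc := by
      ext i j
      simp only [RingHom.mapMatrix_apply, hMc, Matrix.map_apply, Matrix.smul_apply, smul_eq_mul,
        Complex.coe_algebraMap]
      rw [Complex.ofReal_mul, Complex.real_smul]
    rw [RingHom.mapMatrix_apply] at h1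
    rw [h2] at h1
    exact h1
  have huniq := StmtFourAux.eq_exp_mulVec M z hz
  have hCdecay := StmtFourAux.tendsto_exp_smul_mulVec Mc hHur ((algebraMap ℝ ℂ) ∘ z 0)
  have hz0 : Tendsto z atTop (nhds 0) := by
    rw [tendsto_pi_nhds]
    intro i
    have hCi : Tendsto (fun t : ℝ => (exp (t • Mc) *ᵥ ((algebraMap ℝ ℂ) ∘ z 0)) i)
        atTop (nhds 0) := by
      have := (tendsto_pi_nhds.mp hCdecay) i
      simpa using this
    have hrei := (Complex.continuous_re.tendsto 0).comp hCi
    simp only [Complex.zero_re, Function.comp_def] at hrei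
    refine hrei.congr' ?_
    filter_upwards [eventually_ge_atTop (0 : ℝ)] with t ht
    rw [← hexp t]
    show (((exp (t • M)).map ⇑(algebraMap ℝ ℂ) *ᵥ ⇑(algebraMap ℝ ℂ) ∘ z 0) i).re = z t i
    rw [← RingHom.map_mulVec (algebraMap ℝ ℂ) (exp (t • M)) (z 0) i, ← huniq t ht]
    simp
  have hfinal := ((StmtFourAux.toCLM ℝ C).continuous.tendsto 0).comp hz0
  have : Tendsto (fun t => C *ᵥ z t) atTop (nhds 0) := by
    simpa [Matrix.mulVec_zero, Function.comp_def] using hfinal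
  exact this.congr fun t => (herr t).symm
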